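/- (Constancy of the objective along piecewise-differentiable paths in the KKT variety.) Let h₀, h₁, …, h_l ∈ ℝ[x₁,…,x_n] and set h̄ = (h₀, h₁,…,h_l). Let φ : [0,1] → ℝⁿ × ℝˡ, written φ(τ) = (x(τ), λ(τ)), be a continuous map with φ(τ) ∈ V(h̄_KKT) for all τ ∈ [0,1], and suppose there exist 0 = a₀ < a₁ < … < a_{s+1} = 1 such that φ is differentiable on each open interval (a_i, a_{i+1}). Then h₀(x(0)) = h₀(x(1)). Consequently, h₀ is constant on each semi-algebraically path connected component of V(h̄_KKT). -/

import Mathlib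

open MvPolynomial


/-- The KKT variety `V(h̄_KKT) ⊆ ℝⁿ × ℝˡ` associated with `h̄ = (h₀, h₁,…,h_l)`:
pairs `(x, λ)` with `h_j(x) = 0` for all `j` and `∇h₀(x) = Σ_j λ_j ∇h_j(x)`. -/
def KKTset {n l : ℕ} (h₀ : MvPolynomial (Fin n) ℝ)
    (h : Fin l → MvPolynomial (Fin n) ℝ) : Set ((Fin n → ℝ) × (Fin l → ℝ)) :=
  {p | (∀ j, eval p.1 (h j) = 0) ∧
       ∀ i, eval p.1 (pderiv i h₀) = ∑ j, p.2 j * eval p.1 (pderiv i (h j))}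

/-- Chain rule for evaluation of a multivariate polynomial along a curve. -/
lemma eval_hasDerivAt {n : ℕ} (x : ℝ → Fin n → ℝ) (v : Fin n → ℝ) (τ : ℝ)
    (hx : HasDerivAt x v τ) (p : MvPolynomial (Fin n) ℝ) :
    HasDerivAt (fun t => eval (x t) p) (∑ i, eval (x τ) (pderiv i p) * v i) τ := by
  have hxi : ∀ i : Fin n, HasDerivAt (fun t => x t i) (v i) τ := by
    intro i
    have := (ContinuousLinearMap.proj (R := ℝ) (φ := fun _ : Fin n => ℝ) i).hasFDerivAt.comp_hasDerivAt τ hx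
    exact this
  induction p using MvPolynomial.induction_on with
  | C a =>
      simpa using hasDerivAt_const τ (a : ℝ)
  | add p q hp hq =>
      have := hp.add hq
      simpa [map_add, add_mul, Finset.sum_add_distrib, Pi.add_def] using this
  | mul_X p i hp =>
      have hprod := hp.mul (hxi i)
      have : HasDerivAt (fun t => eval (x t) (p * X i))
          ((∑ j, eval (x τ) (pderiv j p) * v j) * x τ i + eval (x τ) p * v i) τ := by
        simpa [map_mul, Pi.mul_def] using hprod
      convert this using 1
      rw [Finset.sum_mul]
      have hsplit : ∀ j : Fin n,
          eval (x τ) (pderiv j (p * X i)) * v j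
            = eval (x τ) (pderiv j p) * v j * x τ i
              + (if j = i then eval (x τ) p * v i else 0) := by
        intro j
        rw [pderiv_mul, pderiv_X]
        by_cases hji : j = i
        · subst hji; simp [Pi.single_eq_same]; ring
        · simp [Pi.single_eq_of_ne hji, hji]; ring
      simp only [hsplit, Finset.sum_add_distrib, Finset.sum_ite_eq', Finset.mem_univ, if_true]

theorem stmt_11 {n l : ℕ}
    (h₀ : MvPolynomial (Fin n) ℝ) (h : Fin l → MvPolynomial (Fin n) ℝ)
    (φ : ℝ → (Fin n → ℝ) × (Fin l → ℝ))
    (hcont : ContinuousOn φ (Set.Icc 0 1))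
    (hmem : ∀ τ ∈ Set.Icc (0 : ℝ) 1, φ τ ∈ KKTset h₀ h)
    (s : ℕ) (a : ℕ → ℝ) (ha0 : a 0 = 0) (has : a (s + 1) = 1)
    (hmono : ∀ i ≤ s, a i < a (i + 1))
    (hdiff : ∀ i ≤ s, ∀ τ ∈ Set.Ioo (a i) (a (i + 1)), DifferentiableAt ℝ φ τ) :
    eval (φ 0).1 h₀ = eval (φ 1).1 h₀ := by
  set g : ℝ → ℝ := fun t => eval (φ t).1 h₀ with hg
  -- monotonicity of the partition
  have hle : ∀ j k : ℕ, j ≤ k → k ≤ s + 1 → a j ≤ a k := by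
    intro j k hjk hks
    induction k with
    | zero => simp_all
    | succ m ih =>
        rcases Nat.lt_or_ge j (m + 1) with hlt | hge
        · have h1 : a j ≤ a m := ih (Nat.lt_succ_iff.mp hlt) (le_trans (Nat.le_succ m) hks)
          exact h1.trans (hmono m (Nat.succ_le_succ_iff.mp hks)).le
        · have : j = m + 1 := le_antisymm hjk hge
          subst this; rfl
  have hsub : ∀ i ≤ s, Set.Icc (a i) (a (i + 1)) ⊆ Set.Icc (0 : ℝ) 1 := by
    intro i hi t ht
    constructor
    · calc (0 : ℝ) = a 0 := ha0.symm
        _ ≤ a i := hle 0 i (Nat.zero_le i) (le_trans hi (Nat.le_succ s))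
        _ ≤ t := ht.1
    · calc t ≤ a (i + 1) := ht.2
        _ ≤ a (s + 1) := hle (i + 1) (s + 1) (Nat.succ_le_succ hi) le_rfl
        _ = 1 := has
  -- derivative of g vanishes on each open interval
  have hderiv : ∀ i ≤ s, ∀ τ ∈ Set.Ioo (a i) (a (i + 1)), HasDerivAt g 0 τ := by
    intro i hi τ hτ
    have hτIcc : τ ∈ Set.Icc (0 : ℝ) 1 := hsub i hi ⟨hτ.1.le, hτ.2.le⟩
    have hφd : HasDerivAt φ (deriv φ τ) τ := (hdiff i hi τ hτ).hasDerivAt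
    have hxd : HasDerivAt (fun t => (φ t).1) (deriv φ τ).1 τ := by
      have := (ContinuousLinearMap.fst ℝ (Fin n → ℝ) (Fin l → ℝ)).hasFDerivAt.comp_hasDerivAt τ hφd
      exact this
    set v : Fin n → ℝ := (deriv φ τ).1 with hv
    -- derivative of each constraint along the curve is zero
    have hDj : ∀ j : Fin l, (∑ i', eval ((φ τ).1) (pderiv i' (h j)) * v i') = 0 := by
      intro j
      have hjd := eval_hasDerivAt (fun t => (φ t).1) v τ hxd (h j)
      have hnhds : Set.Ioo (a i) (a (i + 1)) ∈ nhds τ :=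
        isOpen_Ioo.mem_nhds hτ
      have heq : (fun t => eval ((φ t).1) (h j)) =ᶠ[nhds τ] fun _ => (0 : ℝ) := by
        filter_upwards [hnhds] with t ht
        exact (hmem t (hsub i hi ⟨ht.1.le, ht.2.le⟩)).1 j
      have h0 : HasDerivAt (fun _ : ℝ => (0 : ℝ))
          (∑ i', eval ((φ τ).1) (pderiv i' (h j)) * v i') τ :=
        hjd.congr_of_eventuallyEq heq.symm
      exact (h0.unique (hasDerivAt_const τ 0))
    have hgd := eval_hasDerivAt (fun t => (φ t).1) v τ hxd h₀
    have hzero : (∑ i', eval ((φ τ).1) (pderiv i' h₀) * v i') = 0 := by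
      have hkkt := (hmem τ hτIcc).2
      calc (∑ i', eval ((φ τ).1) (pderiv i' h₀) * v i')
          = ∑ i', (∑ j, (φ τ).2 j * eval ((φ τ).1) (pderiv i' (h j))) * v i' := by
            simp only [hkkt]
        _ = ∑ j, (φ τ).2 j * (∑ i', eval ((φ τ).1) (pderiv i' (h j)) * v i') := by
            simp only [Finset.sum_mul, Finset.mul_sum]
            rw [Finset.sum_comm]
            congr 1; ext j; congr 1; ext i'; ring
        _ = 0 := by simp [hDj]
    rw [← hzero]
    exact hgd
  -- g is continuous on [0,1]
  have hgcont : ContinuousOn g (Set.Icc 0 1) :=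
    (MvPolynomial.continuous_eval (p := h₀)).comp_continuousOn (continuous_fst.comp_continuousOn hcont)
  -- constancy on each subinterval, by MVT
  have hstep : ∀ i ≤ s, g (a (i + 1)) = g (a i) := by
    intro i hi
    obtain ⟨c, _, hc⟩ := exists_hasDerivAt_eq_slope g (fun _ => 0) (hmono i hi)
      (hgcont.mono (hsub i hi)) (hderiv i hi)
    have hne : a (i + 1) - a i ≠ 0 := sub_ne_zero.mpr (hmono i hi).ne'
    have : g (a (i + 1)) - g (a i) = 0 := by
      field_simp at hc
      linarith [hc]
    linarith
  have hall : ∀ i ≤ s + 1, g (a i) = g (a 0) := by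
    intro i hi
    induction i with
    | zero => rfl
    | succ m ih =>
        rw [hstep m (Nat.succ_le_succ_iff.mp hi)]
        exact ih (le_trans (Nat.le_succ m) hi)
  have := hall (s + 1) le_rfl
  rw [ha0, has] at this
  exact this.symm
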